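/- Let F : X → H be a continuous frame for a separable complex Hilbert space H with respect to a measure space (X, μ) with σ-finite positive measure. A map G : X → H is a dual frame of F if and only if G(x) = S_F^{-1}F(x) + Θ(x) for μ-a.e. x, where Θ : X → H is a Bessel mapping with respect to (X, μ) whose synthesis operator satisfies range(T_Θ^*) ⊆ ker(T_F). -/

import Mathlib

open MeasureTheory ENNReal NNReal ContinuousLinearMap

noncomputable section

namespace ContFrame

variable {X : Type*} {H : Type*}

/-- The paper's inner product `⟨f, g⟩`: linear in the first argument and
conjugate-linear in the second (Mathlib's `inner` is conjugate-linear in the first). -/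
def pinner [NormedAddCommGroup H] [InnerProductSpace ℂ H] (f g : H) : ℂ :=
  @inner ℂ _ _ g f

/-- `∫_X |⟨f, F x⟩|² dμ(x)`, as a lower integral. -/
def frameInt [MeasurableSpace X] [NormedAddCommGroup H] [InnerProductSpace ℂ H]
    (μ : Measure X) (F : X → H) (f : H) : ℝ≥0∞ :=
  ∫⁻ x, (‖pinner f (F x)‖₊ : ℝ≥0∞) ^ 2 ∂μ

/-- `F` is weakly measurable: `x ↦ ⟨f, F x⟩` is μ-measurable for every `f`. -/
def WeaklyMeasurable [MeasurableSpace X] [NormedAddCommGroup H] [InnerProductSpace ℂ H]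
    (μ : Measure X) (F : X → H) : Prop :=
  ∀ f : H, AEMeasurable (fun x => pinner f (F x)) μ

/-- `F` is a Bessel mapping for `H` w.r.t. `(X, μ)` with Bessel bound `B < ∞`. -/
def IsBesselMapping [MeasurableSpace X] [NormedAddCommGroup H] [InnerProductSpace ℂ H]
    (μ : Measure X) (F : X → H) (B : ℝ≥0∞) : Prop :=
  B < ⊤ ∧ WeaklyMeasurable μ F ∧
    ∀ f : H, frameInt μ F f ≤ B * (‖f‖₊ : ℝ≥0∞) ^ 2

/-- `F` is a continuous frame for `H` w.r.t. `(X, μ)` with frame bounds `0 < A ≤ B < ∞`: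
`A ‖f‖² ≤ ∫_X |⟨f, F x⟩|² dμ(x) ≤ B ‖f‖²` for all `f ∈ H`. -/
def IsContinuousFrame [MeasurableSpace X] [NormedAddCommGroup H] [InnerProductSpace ℂ H]
    (μ : Measure X) (F : X → H) (A B : ℝ≥0∞) : Prop :=
  0 < A ∧ A ≤ B ∧ B < ⊤ ∧ WeaklyMeasurable μ F ∧
    ∀ f : H, A * (‖f‖₊ : ℝ≥0∞) ^ 2 ≤ frameInt μ F f ∧
      frameInt μ F f ≤ B * (‖f‖₊ : ℝ≥0∞) ^ 2

/-- A realization of the Hilbert tensor product `H = H₁ ⊗ H₂`: a bilinear map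
`tmul` whose simple tensors satisfy `⟪a⊗b, c⊗d⟫ = ⟪a,c⟫⟪b,d⟫` and span a dense subspace. -/
structure HilbertTensorProduct (H₁ H₂ H : Type*)
    [NormedAddCommGroup H₁] [InnerProductSpace ℂ H₁]
    [NormedAddCommGroup H₂] [InnerProductSpace ℂ H₂]
    [NormedAddCommGroup H] [InnerProductSpace ℂ H] where
  tmul : H₁ →ₗ[ℂ] H₂ →ₗ[ℂ] H
  inner_tmul : ∀ (a c : H₁) (b d : H₂),
    (inner ℂ (tmul a b) (tmul c d) : ℂ) = (inner ℂ a c : ℂ) * (inner ℂ b d : ℂ)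
  dense_span : Dense (↑(Submodule.span ℂ {z : H | ∃ a b, z = tmul a b}) : Set H)

/-- `T : L²(X,μ) → H` is the synthesis operator of `F`, characterized by the fact
that its adjoint is the analysis operator `(T^* f)(x) = ⟨f, F x⟩`. -/
def IsSynthesisOperator {X H : Type*} [MeasurableSpace X]
    [NormedAddCommGroup H] [InnerProductSpace ℂ H] [CompleteSpace H]
    (μ : Measure X) (F : X → H) (T : Lp ℂ 2 μ →L[ℂ] H) : Prop :=
  ∀ f : H, (ContinuousLinearMap.adjoint T f : X → ℂ) =ᵐ[μ] fun x => pinner f (F x)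

/-- `G` is a dual frame of the continuous frame `F`:
`⟨f, g⟩ = ∫_X ⟨f, F x⟩ ⟨G x, g⟩ dμ(x)` for all `f, g ∈ H`. -/
def IsDualFrame {X H : Type*} [MeasurableSpace X]
    [NormedAddCommGroup H] [InnerProductSpace ℂ H]
    (μ : Measure X) (F G : X → H) : Prop :=
  (∃ A B, IsContinuousFrame μ G A B) ∧
    ∀ f g : H, pinner f g = ∫ x, pinner f (F x) * pinner (G x) g ∂μ

/-- A subspace `S` of `L²(X, μ)` is a reproducing kernel Hilbert subspace: there is a
kernel map `k : X → L²` with values in `S` such that every `f ∈ S` is represented by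
the function `x ↦ ⟨f, k_x⟩` (in particular, evaluations are bounded on `S`). -/
def IsRKHS {X : Type*} [MeasurableSpace X] (μ : Measure X)
    (S : Submodule ℂ (Lp ℂ 2 μ)) : Prop :=
  ∃ k : X → Lp ℂ 2 μ, (∀ x, k x ∈ S) ∧
    ∀ f ∈ S, (f : X → ℂ) =ᵐ[μ] fun x => pinner f (k x)

section Aux
variable [MeasurableSpace X] {μ : Measure X}
  [NormedAddCommGroup H] [InnerProductSpace ℂ H] [CompleteSpace H]

lemma lintegral_rpow_two (g : X → ℂ) :
    ∫⁻ x, (‖g x‖₊ : ℝ≥0∞) ^ ((2:ℝ≥0∞).toReal) ∂μ = ∫⁻ x, (‖g x‖₊ : ℝ≥0∞) ^ 2 ∂μ := by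
  refine lintegral_congr fun x => ?_
  rw [show ((2:ℝ≥0∞).toReal) = ((2:ℕ):ℝ) by norm_num, ENNReal.rpow_natCast]

lemma nnnorm_sq_eq_lintegral (φ : Lp ℂ 2 μ) :
    (‖φ‖₊ : ℝ≥0∞) ^ 2 = ∫⁻ x, (‖φ x‖₊ : ℝ≥0∞) ^ 2 ∂μ := by
  have hc : (‖φ‖₊ : ℝ≥0∞) = eLpNorm (φ : X → ℂ) 2 μ := by
    rw [Lp.nnnorm_def, ENNReal.coe_toNNReal (Lp.eLpNorm_ne_top φ)]
  rw [hc, eLpNorm_eq_lintegral_rpow_enorm_toReal (by norm_num) (by norm_num)]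
  simp only [enorm_eq_nnnorm]
  rw [lintegral_rpow_two, ← ENNReal.rpow_natCast _ 2, ← ENNReal.rpow_mul]
  norm_num

lemma frameInt_eq {F : X → H} {T : Lp ℂ 2 μ →L[ℂ] H}
    (hT : IsSynthesisOperator μ F T) (f : H) :
    frameInt μ F f = (‖adjoint T f‖₊ : ℝ≥0∞) ^ 2 := by
  rw [nnnorm_sq_eq_lintegral]
  exact (lintegral_congr_ae ((hT f).mono fun x hx => by rw [hx])).symm

lemma weaklyMeasurable_of_syn {F : X → H} {T : Lp ℂ 2 μ →L[ℂ] H}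
    (hT : IsSynthesisOperator μ F T) : WeaklyMeasurable μ F :=
  fun f => ((Lp.aestronglyMeasurable (adjoint T f)).aemeasurable).congr (hT f)

lemma isBessel_of_syn {F : X → H} {T : Lp ℂ 2 μ →L[ℂ] H}
    (hT : IsSynthesisOperator μ F T) :
    IsBesselMapping μ F ((‖adjoint T‖₊ : ℝ≥0∞) ^ 2) := by
  refine ⟨?_, weaklyMeasurable_of_syn hT, fun f => ?_⟩
  · exact pow_lt_top coe_lt_top
  · rw [frameInt_eq hT]
    calc ((‖adjoint T f‖₊ : ℝ≥0∞)) ^ 2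
        ≤ ((‖adjoint T‖₊ * ‖f‖₊ : ℝ≥0) : ℝ≥0∞) ^ 2 := by
          gcongr
          exact_mod_cast (adjoint T).le_opNNNorm f
      _ = (‖adjoint T‖₊ : ℝ≥0∞) ^ 2 * (‖f‖₊ : ℝ≥0∞) ^ 2 := by push_cast; ring

variable {F : X → H} {B : ℝ≥0∞}

lemma memℒp_pinner (hF : IsBesselMapping μ F B) (f : H) :
    MemLp (fun x => pinner f (F x)) 2 μ := by
  obtain ⟨hB, hm, hb⟩ := hF
  refine ⟨(hm f).aestronglyMeasurable, ?_⟩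
  rw [eLpNorm_eq_lintegral_rpow_enorm_toReal (by norm_num) (by norm_num)]
  simp only [enorm_eq_nnnorm]
  rw [lintegral_rpow_two]
  refine ENNReal.rpow_lt_top_of_nonneg (by norm_num) ?_
  exact ((hb f).trans_lt (ENNReal.mul_lt_top hB (pow_lt_top coe_lt_top))).ne

lemma nnnorm_toLp_le (hF : IsBesselMapping μ F B) (f : H) :
    ‖(memℒp_pinner hF f).toLp _‖₊ ≤ NNReal.sqrt B.toNNReal * ‖f‖₊ := by
  have key : (‖(memℒp_pinner hF f).toLp _‖₊ : ℝ≥0∞) ^ 2 ≤ B * (‖f‖₊ : ℝ≥0∞) ^ 2 := by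
    rw [nnnorm_sq_eq_lintegral]
    refine le_trans (le_of_eq (lintegral_congr_ae
      (((memℒp_pinner hF f).coeFn_toLp).mono fun x hx => by simp only [hx]))) (hF.2.2 f)
  have key2 : ‖(memℒp_pinner hF f).toLp _‖₊ ^ 2 ≤ B.toNNReal * ‖f‖₊ ^ 2 := by
    rw [← ENNReal.coe_le_coe, ENNReal.coe_mul, ENNReal.coe_pow, ENNReal.coe_pow,
      ENNReal.coe_toNNReal hF.1.ne]
    exact key
  calc ‖(memℒp_pinner hF f).toLp _‖₊
      = NNReal.sqrt (‖(memℒp_pinner hF f).toLp _‖₊ ^ 2) := (NNReal.sqrt_sq _).symm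
    _ ≤ NNReal.sqrt (B.toNNReal * ‖f‖₊ ^ 2) := NNReal.sqrt_le_sqrt.mpr key2
    _ = NNReal.sqrt B.toNNReal * ‖f‖₊ := by
        rw [NNReal.sqrt_mul, NNReal.sqrt_sq]

def anaCLM (hF : IsBesselMapping μ F B) : H →L[ℂ] Lp ℂ 2 μ :=
  LinearMap.mkContinuous
    { toFun := fun f => (memℒp_pinner hF f).toLp _
      map_add' := fun f g => by
        refine Lp.ext ?_
        filter_upwards [(memℒp_pinner hF (f + g)).coeFn_toLp,
          Lp.coeFn_add ((memℒp_pinner hF f).toLp _) ((memℒp_pinner hF g).toLp _),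
          (memℒp_pinner hF f).coeFn_toLp, (memℒp_pinner hF g).coeFn_toLp] with x h1 h2 h3 h4
        rw [h1, h2]; simp only [Pi.add_apply]; rw [h3, h4]
        simp only [pinner, inner_add_right]
      map_smul' := fun c f => by
        simp only [RingHom.id_apply]
        refine Lp.ext ?_
        filter_upwards [(memℒp_pinner hF (c • f)).coeFn_toLp,
          Lp.coeFn_smul c ((memℒp_pinner hF f).toLp _),
          (memℒp_pinner hF f).coeFn_toLp] with x h1 h2 h3
        rw [h1, h2]; simp only [Pi.smul_apply]; rw [h3]
        simp [pinner, inner_smul_right] }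
    (NNReal.sqrt B.toNNReal : ℝ)
    (fun f => by
      have h : (‖(memℒp_pinner hF f).toLp _‖₊ : ℝ) ≤
          (NNReal.sqrt B.toNNReal : ℝ) * (‖f‖₊ : ℝ) := by
        exact_mod_cast nnnorm_toLp_le hF f
      exact h)

lemma isSyn_anaCLM (hF : IsBesselMapping μ F B) :
    IsSynthesisOperator μ F (adjoint (anaCLM hF)) := by
  intro f
  rw [adjoint_adjoint]
  exact (memℒp_pinner hF f).coeFn_toLp

lemma syn_unique {T T' : Lp ℂ 2 μ →L[ℂ] H} (hT : IsSynthesisOperator μ F T)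
    (hT' : IsSynthesisOperator μ F T') : T = T' := by
  have h : adjoint T = adjoint T' :=
    ContinuousLinearMap.ext fun f => Lp.ext ((hT f).trans (hT' f).symm)
  rw [← adjoint_adjoint T, h, adjoint_adjoint]

lemma integral_pinner {F G : X → H} {TF TG : Lp ℂ 2 μ →L[ℂ] H}
    (hTF : IsSynthesisOperator μ F TF) (hTG : IsSynthesisOperator μ G TG) (f g : H) :
    ∫ x, pinner f (F x) * pinner (G x) g ∂μ = @inner ℂ _ _ g (TG (adjoint TF f)) := by
  rw [← ContinuousLinearMap.adjoint_inner_left TG (adjoint TF f) g, L2.inner_def]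
  refine integral_congr_ae ?_
  filter_upwards [hTG g, hTF f] with x h1 h2
  rw [h1, h2, RCLike.inner_apply]
  simp only [pinner]
  congr 1
  exact (inner_conj_symm (𝕜 := ℂ) (E := H) _ _).symm

end Aux

set_option maxHeartbeats 2000000 in
/-- The dual frames of a continuous frame `F` are precisely the maps
`G(x) = S_F^{-1}F(x) + Θ(x)` where `Θ` is a Bessel mapping whose analysis operator
satisfies `range T_Θ^* ⊆ ker T_F`. -/
theorem dual_frames_characterization'
    {X H : Type*} [MeasurableSpace X]
    [NormedAddCommGroup H] [InnerProductSpace ℂ H] [CompleteSpace H]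
      [TopologicalSpace.SeparableSpace H]
    (μ : Measure X) [SigmaFinite μ]
    (F : X → H) (A B : ℝ≥0∞) (hF : IsContinuousFrame μ F A B)
    (TF : Lp ℂ 2 μ →L[ℂ] H) (hTF : IsSynthesisOperator μ F TF)
    -- `SFinv` is the inverse of the frame operator `S_F = T_F T_F^*`
    (SFinv : H →L[ℂ] H)
    (hSFinv₁ : SFinv.comp (TF.comp (ContinuousLinearMap.adjoint TF))
      = ContinuousLinearMap.id ℂ H)
    (hSFinv₂ : (TF.comp (ContinuousLinearMap.adjoint TF)).comp SFinv
      = ContinuousLinearMap.id ℂ H)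
    (G : X → H) :
    IsDualFrame μ F G ↔
      ∃ (Θ : X → H) (BΘ : ℝ≥0∞) (TΘ : Lp ℂ 2 μ →L[ℂ] H),
        IsBesselMapping μ Θ BΘ ∧ IsSynthesisOperator μ Θ TΘ ∧
        LinearMap.range (ContinuousLinearMap.adjoint TΘ : H →ₗ[ℂ] Lp ℂ 2 μ) ≤ LinearMap.ker (TF : Lp ℂ 2 μ →ₗ[ℂ] H) ∧
        ∀ᵐ x ∂μ, G x = SFinv (F x) + Θ x := by
  have hself : adjoint SFinv = SFinv := by
    have hS : adjoint (TF.comp (adjoint TF)) = TF.comp (adjoint TF) := by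
      rw [adjoint_comp, adjoint_adjoint]
    have h1 : (TF.comp (adjoint TF)).comp (adjoint SFinv) = ContinuousLinearMap.id ℂ H := by
      have := congrArg (fun T => adjoint T) hSFinv₁
      simpa [adjoint_comp, hS, adjoint_id] using this
    calc adjoint SFinv
        = (ContinuousLinearMap.id ℂ H).comp (adjoint SFinv) := (id_comp _).symm
      _ = (SFinv.comp (TF.comp (adjoint TF))).comp (adjoint SFinv) := by rw [hSFinv₁]
      _ = SFinv.comp ((TF.comp (adjoint TF)).comp (adjoint SFinv)) := by rw [comp_assoc]
      _ = SFinv := by rw [h1, comp_id]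
  have hpin : ∀ (f v : H), pinner f (SFinv v) = pinner (SFinv f) v := fun f v => by
    simp only [pinner]
    rw [← ContinuousLinearMap.adjoint_inner_right SFinv v f, hself]
  constructor
  · rintro ⟨⟨A', B', hGf⟩, hdual⟩
    have hGB : IsBesselMapping μ G B' := ⟨hGf.2.2.1, hGf.2.2.2.1, fun f => (hGf.2.2.2.2 f).2⟩
    obtain ⟨TG, hTG⟩ : ∃ T : Lp ℂ 2 μ →L[ℂ] H, IsSynthesisOperator μ G T :=
      ⟨adjoint (anaCLM hGB), isSyn_anaCLM hGB⟩
    have hid : TG.comp (adjoint TF) = ContinuousLinearMap.id ℂ H := by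
      ext f
      refine ext_inner_left ℂ fun g => ?_
      have h1 := hdual f g
      rw [integral_pinner hTF hTG f g] at h1
      simp only [ContinuousLinearMap.coe_comp', Function.comp_apply,
        ContinuousLinearMap.coe_id', id_eq]
      exact h1.symm
    have hsynΘ : IsSynthesisOperator μ (fun x => G x - SFinv (F x)) (TG - SFinv.comp TF) := by
      intro f
      have hadj : adjoint (TG - SFinv.comp TF) f = adjoint TG f - adjoint TF (SFinv f) := by
        rw [map_sub, adjoint_comp, hself]; rfl
      rw [hadj]
      filter_upwards [Lp.coeFn_sub (adjoint TG f) (adjoint TF (SFinv f)), hTG f,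
        hTF (SFinv f)] with x h0 h1 h2
      rw [h0]; simp only [Pi.sub_apply]; rw [h1, h2]
      rw [← hpin f (F x)]
      simp [pinner, inner_sub_left]
    refine ⟨fun x => G x - SFinv (F x), (‖adjoint (TG - SFinv.comp TF)‖₊ : ℝ≥0∞) ^ 2,
      TG - SFinv.comp TF, isBessel_of_syn hsynΘ, hsynΘ, ?_, ?_⟩
    · rintro φ ⟨f, rfl⟩
      have hz : TF.comp (adjoint (TG - SFinv.comp TF)) = 0 := by
        rw [map_sub, adjoint_comp, hself, ContinuousLinearMap.comp_sub]
        have e1 : TF.comp (adjoint TG) = ContinuousLinearMap.id ℂ H := by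
          have := congrArg (fun T => adjoint T) hid
          simpa [adjoint_comp, adjoint_adjoint, adjoint_id] using this
        have e2 : TF.comp ((adjoint TF).comp SFinv) = ContinuousLinearMap.id ℂ H := by
          rw [← comp_assoc]; exact hSFinv₂
        rw [e1, e2, sub_self]
      have := ContinuousLinearMap.ext_iff.mp hz f
      simpa [LinearMap.mem_ker] using this
    · exact Filter.Eventually.of_forall fun x => by simp
  · rintro ⟨Θ, BΘ, TΘ, hBes, hsynΘ, hrange, hae⟩
    set TG := SFinv.comp TF + TΘ with hTGdef
    have hTG : IsSynthesisOperator μ G TG := by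
      intro f
      have hadj : adjoint TG f = adjoint TF (SFinv f) + adjoint TΘ f := by
        rw [hTGdef, map_add, adjoint_comp, hself]; rfl
      rw [hadj]
      filter_upwards [Lp.coeFn_add (adjoint TF (SFinv f)) (adjoint TΘ f), hTF (SFinv f),
        hsynΘ f, hae] with x h0 h1 h2 h3
      rw [h0]; simp only [Pi.add_apply]; rw [h1, h2, h3]
      rw [← hpin f (F x)]
      simp [pinner, inner_add_left]
    have hzero : TΘ.comp (adjoint TF) = 0 := by
      have hz : TF.comp (adjoint TΘ) = 0 := by
        ext f
        simp only [ContinuousLinearMap.coe_comp', Function.comp_apply,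
          ContinuousLinearMap.zero_apply]
        exact LinearMap.mem_ker.mp (hrange ⟨f, rfl⟩)
      have := congrArg (fun T => adjoint T) hz
      simpa [adjoint_comp, adjoint_adjoint] using this
    have hid : TG.comp (adjoint TF) = ContinuousLinearMap.id ℂ H := by
      rw [hTGdef, ContinuousLinearMap.add_comp, hzero, add_zero, comp_assoc, hSFinv₁]
    have hid' : TF.comp (adjoint TG) = ContinuousLinearMap.id ℂ H := by
      have := congrArg (fun T => adjoint T) hid
      simpa [adjoint_comp, adjoint_adjoint, adjoint_id] using this
    constructor
    · refine ⟨((‖TF‖₊ : ℝ≥0∞) ^ 2)⁻¹ ⊓ 1, (‖adjoint TG‖₊ : ℝ≥0∞) ^ 2 ⊔ 1, ?_, ?_, ?_,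
        weaklyMeasurable_of_syn hTG, fun f => ⟨?_, ?_⟩⟩
      · exact lt_min (ENNReal.inv_pos.mpr (pow_ne_top coe_ne_top)) one_pos
      · exact le_trans (min_le_right _ _) (le_max_right _ _)
      · exact max_lt (pow_lt_top coe_lt_top) one_lt_top
      · -- lower bound
        rw [frameInt_eq hTG]
        by_cases hz : ‖f‖₊ = 0
        · simp [hz]
        · have hf : TF (adjoint TG f) = f := by
            have := ContinuousLinearMap.ext_iff.mp hid' f
            simpa using this
          have hnn : ‖f‖₊ ≤ ‖TF‖₊ * ‖adjoint TG f‖₊ := by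
            conv_lhs => rw [← hf]
            exact TF.le_opNNNorm _
          have hTFz : ‖TF‖₊ ≠ 0 := by
            intro h0
            exact hz (le_antisymm (by simpa [h0] using hnn) zero_le)
          calc (((‖TF‖₊ : ℝ≥0∞) ^ 2)⁻¹ ⊓ 1) * (‖f‖₊ : ℝ≥0∞) ^ 2
              ≤ ((‖TF‖₊ : ℝ≥0∞) ^ 2)⁻¹ *
                ((‖TF‖₊ : ℝ≥0∞) ^ 2 * (‖adjoint TG f‖₊ : ℝ≥0∞) ^ 2) := by
                gcongr
                · exact min_le_left _ _
                · calc ((‖f‖₊ : ℝ≥0∞)) ^ 2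
                      ≤ ((‖TF‖₊ * ‖adjoint TG f‖₊ : ℝ≥0) : ℝ≥0∞) ^ 2 := by
                        exact_mod_cast pow_le_pow_left₀ zero_le hnn 2
                    _ = (‖TF‖₊ : ℝ≥0∞) ^ 2 * (‖adjoint TG f‖₊ : ℝ≥0∞) ^ 2 := by
                        push_cast; ring
            _ = (‖adjoint TG f‖₊ : ℝ≥0∞) ^ 2 := by
                rw [← mul_assoc, ENNReal.inv_mul_cancel
                  (pow_ne_zero 2 (by simpa using hTFz)) (pow_ne_top coe_ne_top), one_mul]
      · -- upper bound
        rw [frameInt_eq hTG]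
        calc ((‖adjoint TG f‖₊ : ℝ≥0∞)) ^ 2
            ≤ ((‖adjoint TG‖₊ * ‖f‖₊ : ℝ≥0) : ℝ≥0∞) ^ 2 := by
              gcongr; exact_mod_cast (adjoint TG).le_opNNNorm f
          _ = (‖adjoint TG‖₊ : ℝ≥0∞) ^ 2 * (‖f‖₊ : ℝ≥0∞) ^ 2 := by push_cast; ring
          _ ≤ ((‖adjoint TG‖₊ : ℝ≥0∞) ^ 2 ⊔ 1) * (‖f‖₊ : ℝ≥0∞) ^ 2 := by
              gcongr; exact le_max_left _ _
    · intro f g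
      rw [integral_pinner hTF hTG f g]
      have hf : TG (adjoint TF f) = f := by
        have := ContinuousLinearMap.ext_iff.mp hid f
        simpa using this
      rw [hf]; rfl

end ContFrame
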